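/- Let F be an infinite field of characteristic different from 2 and let A = M_n(F) carry an elementary grading by a group G, with H the group of permutations σ ∈ S_n for which Λ_σ is a graded automorphism. Let P ∈ M_n(F) and let f be a polynomial in F⟨X_G⟩ that is not a graded identity for A and such that the result of every f-admissible substitution is a scalar multiple of P. Then for every σ ∈ H there exists a non-zero scalar λ(σ) ∈ F^× with Λ_σ(P) = λ(σ)^{-1} P, and the map λ: H → F^× is a group homomorphism. -/

import Mathlib

section GradedDefs

variable {F : Type*} [Field F] {G : Type*} [Group G] {A : Type*} [Ring A] [Algebra F A]

/-- An internal algebra grading of `A` by the group `G`: the components are independent,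
span `A`, and multiply according to the group operation. -/
structure IsAlgGrading [DecidableEq G] (𝒜 : G → Submodule F A) : Prop where
  internal : DirectSum.IsInternal 𝒜
  mul_mem : ∀ {g h : G} {x y : A}, x ∈ 𝒜 g → y ∈ 𝒜 h → x * y ∈ 𝒜 (g * h)

/-- An admissible (graded) substitution: the variable `x_{i,g}` is replaced by an element
of the homogeneous component of degree `g`. -/
def GradedSubst (𝒜 : G → Submodule F A) (a : ℕ × G → A) : Prop := ∀ p : ℕ × G, a p ∈ 𝒜 p.2

/-- `f` is a graded polynomial identity. -/
def IsGradedIdentity (𝒜 : G → Submodule F A) (f : FreeAlgebra F (ℕ × G)) : Prop :=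
  ∀ a : ℕ × G → A, GradedSubst 𝒜 a → FreeAlgebra.lift F a f = 0

/-- `f` is a graded central polynomial. -/
def IsGradedCentral (𝒜 : G → Submodule F A) (f : FreeAlgebra F (ℕ × G)) : Prop :=
  ¬ IsGradedIdentity 𝒜 f ∧
    ∀ a : ℕ × G → A, GradedSubst 𝒜 a → FreeAlgebra.lift F a f ∈ Set.center A

/-- `f` only uses (graded) variables from the set `S`. -/
def UsesVars (S : Set (ℕ × G)) (f : FreeAlgebra F (ℕ × G)) : Prop :=
  f ∈ Algebra.adjoin F (FreeAlgebra.ι F '' S)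

/-- The primeness property for graded central polynomials: if a product of two polynomials
in disjoint sets of variables is graded central, then both factors are graded central. -/
def HasGradedPrimeness (𝒜 : G → Submodule F A) : Prop :=
  ∀ (S T : Set (ℕ × G)) (f g : FreeAlgebra F (ℕ × G)),
    Disjoint S T → UsesVars S f → UsesVars T g →
    IsGradedCentral 𝒜 (f * g) →
    IsGradedCentral 𝒜 f ∧ IsGradedCentral 𝒜 g

end GradedDefs

section Elementary

variable (F : Type*) [Field F] {G : Type*} [Group G] {n : ℕ}

/-- The homogeneous component of degree `x` of the elementary grading of `Mₙ(F)`
induced by the tuple `v`: it is spanned by the matrix units `E i j` with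
`(v i)⁻¹ * v j = x`. -/
def elemComp (v : Fin n → G) (x : G) : Submodule F (Matrix (Fin n) (Fin n) F) where
  carrier := {M | ∀ i j, (v i)⁻¹ * v j ≠ x → M i j = 0}
  add_mem' := by
    intro M N hM hN i j h
    simp [Matrix.add_apply, hM i j h, hN i j h]
  zero_mem' := by intro i j _; simp
  smul_mem' := by
    intro c M hM i j h
    simp [Matrix.smul_apply, hM i j h]

/-- The subgroup of permutations `σ` of `{1,…,n}` for which the automorphism `Λ_σ`
(which sends `E i j` to `E (σ i) (σ j)`) is a graded automorphism. -/
def GradedPerms (v : Fin n → G) : Subgroup (Equiv.Perm (Fin n)) where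
  carrier := {σ | ∀ i j, (v (σ i))⁻¹ * v (σ j) = (v i)⁻¹ * v j}
  one_mem' := by intro i j; simp
  mul_mem' := by
    intro σ τ hσ hτ i j
    simpa [Equiv.Perm.mul_apply] using (hσ (τ i) (τ j)).trans (hτ i j)
  inv_mem' := by
    intro σ hσ i j
    simpa using (hσ (σ⁻¹ i) (σ⁻¹ j)).symm

/-- The automorphism `Λ_σ` of the matrix algebra, determined by
`Λ_σ (E i j) = E (σ i) (σ j)`. -/
def permConj (σ : Equiv.Perm (Fin n)) (M : Matrix (Fin n) (Fin n) F) :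
    Matrix (Fin n) (Fin n) F :=
  M.submatrix ⇑σ.symm ⇑σ.symm

end Elementary

/-- Let `A = Mₙ(F)` carry an elementary grading by a group `G`, with
`H` the group of permutations `σ` for which `Λ_σ` is a graded automorphism.  If `f` is
not a graded identity for `A` and the result of every `f`-admissible substitution is a
scalar multiple of `P`, then there is a group homomorphism `λ : H → Fˣ` with
`Λ_σ(P) = λ(σ)⁻¹ • P` for all `σ ∈ H`. -/
theorem hom_of_scalar_multiple
    (F : Type*) [Field F] [Infinite F] (hchar : (2 : F) ≠ 0)
    {G : Type*} [Group G] {n : ℕ} (v : Fin n → G)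
    (P : Matrix (Fin n) (Fin n) F) (f : FreeAlgebra F (ℕ × G))
    (hf : ¬ IsGradedIdentity (elemComp F v) f)
    (hP : ∀ a : ℕ × G → Matrix (Fin n) (Fin n) F, GradedSubst (elemComp F v) a →
      ∃ c : F, FreeAlgebra.lift F a f = c • P) :

    ∃ lam : ↥(GradedPerms v) →* Fˣ,
      ∀ σ : ↥(GradedPerms v),
        permConj F (σ : Equiv.Perm (Fin n)) P = (((lam σ)⁻¹ : Fˣ) : F) • P := by
  classical
  obtain ⟨a, ha, hne⟩ : ∃ a, GradedSubst (elemComp F v) a ∧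
      FreeAlgebra.lift F a f ≠ 0 := by
    by_contra h
    push_neg at h
    exact hf fun a ha => h a ha
  obtain ⟨c, hc⟩ := hP a ha
  have hc0 : c ≠ 0 := by rintro rfl; simp [hc] at hne
  have hPne : P ≠ 0 := by
    rintro rfl; rw [hc] at hne; simp at hne
  have key : ∀ σ : ↥(GradedPerms v), ∃ d : F, d ≠ 0 ∧
      permConj F (σ : Equiv.Perm (Fin n)) P = d • P := by
    intro σ
    set Λ : Matrix (Fin n) (Fin n) F ≃ₐ[F] Matrix (Fin n) (Fin n) F :=
      Matrix.reindexAlgEquiv F F (σ : Equiv.Perm (Fin n)) with hΛ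
    have hperm : ∀ M, permConj F (σ : Equiv.Perm (Fin n)) M = Λ M := fun M => rfl
    have hinv : (σ : Equiv.Perm (Fin n))⁻¹ ∈ GradedPerms v :=
      (GradedPerms v).inv_mem σ.2
    have ha' : GradedSubst (elemComp F v) (fun p => Λ (a p)) := by
      intro p i j hij
      have h1 : (v ((σ : Equiv.Perm (Fin n))⁻¹ i))⁻¹ * v ((σ : Equiv.Perm (Fin n))⁻¹ j)
          = (v i)⁻¹ * v j := hinv i j
      have := ha p ((σ : Equiv.Perm (Fin n))⁻¹ i) ((σ : Equiv.Perm (Fin n))⁻¹ j)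
        (by rw [h1]; exact hij)
      simpa [hΛ, Matrix.reindexAlgEquiv_apply, Matrix.reindex_apply,
        Matrix.submatrix_apply] using this
    obtain ⟨c', hc'⟩ := hP _ ha'
    have hlift : FreeAlgebra.lift F (fun p => Λ (a p)) f
        = Λ (FreeAlgebra.lift F a f) := by
      have heq : (Λ.toAlgHom.comp (FreeAlgebra.lift F a))
          = FreeAlgebra.lift F (fun p => Λ (a p)) := by
        apply FreeAlgebra.hom_ext
        funext p
        simp
      exact (congrArg (fun (g : FreeAlgebra F (ℕ × G) →ₐ[F] _) => g f) heq).symm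
    have hmain : c • Λ P = c' • P := by
      rw [← map_smul, ← hc, ← hlift, hc']
    have hc'0 : c' ≠ 0 := by
      rintro rfl
      rw [zero_smul] at hmain
      have : Λ P = 0 := by
        have := smul_eq_zero.mp hmain
        tauto
      exact hPne (by simpa using (map_eq_zero_iff Λ Λ.injective).mp this)
    refine ⟨c' / c, div_ne_zero hc'0 hc0, ?_⟩
    rw [hperm]
    have : Λ P = (c⁻¹ * c') • P := by
      rw [mul_smul, ← hmain, ← mul_smul, inv_mul_cancel₀ hc0, one_smul]
    rw [this, div_eq_inv_mul]
  choose d hd0 hd using key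
  have duniq : ∀ (σ : ↥(GradedPerms v)) (e : F),
      permConj F (σ : Equiv.Perm (Fin n)) P = e • P → d σ = e := by
    intro σ e he
    have : d σ • P = e • P := by rw [← hd σ, he]
    exact smul_left_injective F hPne this
  have permmul : ∀ σ τ : ↥(GradedPerms v),
      permConj F ((σ * τ : ↥(GradedPerms v)) : Equiv.Perm (Fin n)) P
        = permConj F (σ : Equiv.Perm (Fin n))
            (permConj F (τ : Equiv.Perm (Fin n)) P) := by
    intro σ τ
    simp only [permConj, Matrix.submatrix_submatrix]
    rfl
  have dmul : ∀ σ τ : ↥(GradedPerms v), d (σ * τ) = d σ * d τ := by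
    intro σ τ
    apply duniq
    rw [permmul, hd τ]
    have : permConj F (σ : Equiv.Perm (Fin n)) (d τ • P)
        = d τ • permConj F (σ : Equiv.Perm (Fin n)) P := by
      simp [permConj, Matrix.submatrix_smul]
    rw [this, hd σ, ← mul_smul, mul_comm]
  have done1 : d 1 = 1 := by
    apply duniq
    simp [permConj]
    rfl
  refine ⟨{ toFun := fun σ => (Units.mk0 (d σ) (hd0 σ))⁻¹
            map_one' := by
              simp only [done1]
              simp
            map_mul' := by
              intro σ τ
              show (Units.mk0 (d (σ * τ)) (hd0 _))⁻¹
                  = (Units.mk0 (d σ) (hd0 σ))⁻¹ * (Units.mk0 (d τ) (hd0 τ))⁻¹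
              rw [Units.ext_iff]
              simp [dmul, mul_comm] }, ?_⟩
  intro σ
  simpa using hd σ
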